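/- Let n ≥ 1 and let V : ℝⁿ → ℝ be continuously differentiable with x ↦ e^{−V(x)} integrable on ℝⁿ. Define the generator 𝓛f(x) := −∇V(x)·∇f(x) + Δf(x) + ∫_{ℝⁿ}(f(z) − f(x)) e^{−V(z)} dz. Then for all smooth compactly supported f, g : ℝⁿ → ℝ, ∫_{ℝⁿ} f(x) 𝓛g(x) e^{−V(x)} dx = ∫_{ℝⁿ} g(x) 𝓛f(x) e^{−V(x)} dx. -/

import Mathlib

open MeasureTheory Matrix

/-- The gradient of a scalar function on `ℝⁿ`, given by the partial derivatives. -/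
noncomputable def grad {n : ℕ} (f : (Fin n → ℝ) → ℝ) (x : Fin n → ℝ) : Fin n → ℝ :=
  fun i => fderiv ℝ f x (Pi.single i 1)

/-- The Laplacian of a scalar function on `ℝⁿ`. -/
noncomputable def lap {n : ℕ} (f : (Fin n → ℝ) → ℝ) (x : Fin n → ℝ) : ℝ :=
  ∑ i, fderiv ℝ (fun y => fderiv ℝ f y (Pi.single i 1)) x (Pi.single i 1)

namespace Stmt17Aux

variable {n : ℕ}

lemma integ {h : (Fin n → ℝ) → ℝ} (hc : Continuous h) (hs : HasCompactSupport h) :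
    Integrable h :=
  hc.integrable_of_hasCompactSupport hs

lemma contDiff_partial {h : (Fin n → ℝ) → ℝ} (hh : ContDiff ℝ (⊤ : ℕ∞) h) (v : Fin n → ℝ) :
    ContDiff ℝ (⊤ : ℕ∞) fun x => fderiv ℝ h x v :=
  (hh.fderiv_right (m := (⊤ : ℕ∞)) (by exact_mod_cast le_top)).clm_apply contDiff_const

lemma cont_partial {h : (Fin n → ℝ) → ℝ} (hh : ContDiff ℝ (⊤ : ℕ∞) h) (v : Fin n → ℝ) :
    Continuous fun x => fderiv ℝ h x v :=
  (contDiff_partial hh v).continuous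

lemma hcs_partial {h : (Fin n → ℝ) → ℝ} (hs : HasCompactSupport h) (v : Fin n → ℝ) :
    HasCompactSupport fun x => fderiv ℝ h x v :=
  hs.fderiv_apply (𝕜 := ℝ) v

lemma cont_gradV {V : (Fin n → ℝ) → ℝ} (hV : ContDiff ℝ 1 V) (v : Fin n → ℝ) :
    Continuous fun x => fderiv ℝ V x v :=
  ((hV.fderiv_right (m := 0) (by norm_num)).continuous).clm_apply continuous_const

/-- Integration by parts in coordinate `i` against the weight `exp (-V)`. -/
lemma ibp_coord {V f g : (Fin n → ℝ) → ℝ} (hV : ContDiff ℝ 1 V)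
    (hf : ContDiff ℝ (⊤ : ℕ∞) f) (hfs : HasCompactSupport f)
    (hg : ContDiff ℝ (⊤ : ℕ∞) g) (hgs : HasCompactSupport g) (i : Fin n) :
    ∫ x, ((f x * Real.exp (-V x)) * fderiv ℝ (fun y => fderiv ℝ g y (Pi.single i 1)) x (Pi.single i 1)
        + (f x * (Real.exp (-V x) * -(fderiv ℝ V x (Pi.single i 1)))) * fderiv ℝ g x (Pi.single i 1))
      = - ∫ x, (fderiv ℝ f x (Pi.single i 1) * fderiv ℝ g x (Pi.single i 1)) * Real.exp (-V x) := by
  classical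
  set v : Fin n → ℝ := Pi.single i 1 with hv
  set ρ : (Fin n → ℝ) → ℝ := fun x => Real.exp (-V x) with hρ
  have hρc : Continuous ρ := Real.continuous_exp.comp hV.continuous.neg
  have hVd : Differentiable ℝ V := hV.differentiable one_ne_zero
  -- the function ∂ᵢ g
  set G : (Fin n → ℝ) → ℝ := fun y => fderiv ℝ g y v with hG
  have hGc : ContDiff ℝ (⊤ : ℕ∞) G := contDiff_partial hg v
  have hGs : HasCompactSupport G := hcs_partial hgs v
  -- the function f · ρ and its derivative
  set F : (Fin n → ℝ) → ℝ := fun x => f x * ρ x with hF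
  set F' : (Fin n → ℝ) → (Fin n → ℝ) →L[ℝ] ℝ :=
    fun x => f x • (ρ x • -(fderiv ℝ V x)) + ρ x • fderiv ℝ f x with hF'
  have hFd : ∀ x, HasFDerivAt F (F' x) x := by
    intro x
    have h1 : HasFDerivAt (fun y => Real.exp (-V y)) (Real.exp (-V x) • -(fderiv ℝ V x)) x :=
      ((hVd x).hasFDerivAt.neg).exp
    exact ((hf.differentiable (by simp) x).hasFDerivAt.mul h1)
  have hGd : ∀ x, HasFDerivAt G (fderiv ℝ G x) x :=
    fun x => (hGc.differentiable (by simp) x).hasFDerivAt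
  have hF'v : ∀ x, F' x v = f x * (ρ x * -(fderiv ℝ V x v)) + ρ x * fderiv ℝ f x v := by
    intro x; simp [hF', smul_eq_mul, mul_assoc]
  -- compact support / continuity facts
  have hcF : Continuous F := (hf.continuous).mul hρc
  have hsF : HasCompactSupport F := hfs.mul_right
  have hcG : Continuous G := hGc.continuous
  have hcG' : Continuous fun x => fderiv ℝ G x v := cont_partial hGc v
  have hcF' : Continuous fun x => F' x v := by
    simp only [hF'v]
    exact (hf.continuous.mul (hρc.mul (cont_gradV hV v).neg)).add
      (hρc.mul (cont_partial hf v))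
  have int1 : Integrable fun x => F' x v * G x :=
    integ (hcF'.mul hcG) (HasCompactSupport.mul_left hGs)
  have int2 : Integrable fun x => F x * fderiv ℝ G x v :=
    integ (hcF.mul hcG') (hsF.mul_right)
  have int3 : Integrable fun x => F x * G x := integ (hcF.mul hcG) (hsF.mul_right)
  have key := integral_bilinear_hasFDerivAt_right_eq_neg_left_of_integrable
    (B := ContinuousLinearMap.mul ℝ ℝ) (v := v) int1 int2 int3 (fun x _ => hFd x) (fun x _ => hGd x)
  simp only [ContinuousLinearMap.mul_apply'] at key
  -- split the integrals
  have intA : Integrable fun x => F x * fderiv ℝ G x v := int2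
  have intB : Integrable fun x => (f x * (ρ x * -(fderiv ℝ V x v))) * G x :=
    integ ((hf.continuous.mul (hρc.mul (cont_gradV hV v).neg)).mul hcG)
      (HasCompactSupport.mul_left hGs)
  have intC : Integrable fun x => (ρ x * fderiv ℝ f x v) * G x :=
    integ ((hρc.mul (cont_partial hf v)).mul hcG) (HasCompactSupport.mul_left hGs)
  have split : ∫ x, F' x v * G x
      = (∫ x, (f x * (ρ x * -(fderiv ℝ V x v))) * G x) + ∫ x, (ρ x * fderiv ℝ f x v) * G x := by
    have heq : (fun x => F' x v * G x)
        = fun x => (f x * (ρ x * -(fderiv ℝ V x v))) * G x + (ρ x * fderiv ℝ f x v) * G x := by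
      ext x; rw [hF'v]; ring
    rw [heq, integral_add intB intC]
  have goal1 : ∫ x, (F x * fderiv ℝ G x v + (f x * (ρ x * -(fderiv ℝ V x v))) * G x)
      = (∫ x, F x * fderiv ℝ G x v) + ∫ x, (f x * (ρ x * -(fderiv ℝ V x v))) * G x :=
    integral_add intA intB
  have last : ∫ x, (ρ x * fderiv ℝ f x v) * G x
      = ∫ x, (fderiv ℝ f x v * fderiv ℝ g x v) * ρ x := by
    congr 1; ext x; rw [hG]; ring
  rw [goal1, key, split, ← last]; ring

/-- The diffusion part of the generator against the Gibbs weight equals minus the Dirichlet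
form. -/
lemma dirichlet {V f g : (Fin n → ℝ) → ℝ} (hV : ContDiff ℝ 1 V)
    (hf : ContDiff ℝ (⊤ : ℕ∞) f) (hfs : HasCompactSupport f)
    (hg : ContDiff ℝ (⊤ : ℕ∞) g) (hgs : HasCompactSupport g) :
    ∫ x, f x * (-(grad V x ⬝ᵥ grad g x) + lap g x) * Real.exp (-V x)
      = - ∫ x, (grad f x ⬝ᵥ grad g x) * Real.exp (-V x) := by
  classical
  set ρ : (Fin n → ℝ) → ℝ := fun x => Real.exp (-V x) with hρ
  have hρc : Continuous ρ := Real.continuous_exp.comp hV.continuous.neg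
  have lhs_eq : ∀ x, f x * (-(grad V x ⬝ᵥ grad g x) + lap g x) * ρ x
      = ∑ i, ((f x * ρ x) * fderiv ℝ (fun y => fderiv ℝ g y (Pi.single i 1)) x (Pi.single i 1)
          + (f x * (ρ x * -(fderiv ℝ V x (Pi.single i 1)))) * fderiv ℝ g x (Pi.single i 1)) := by
    intro x
    simp only [grad, lap, dotProduct]
    rw [Finset.sum_add_distrib, ← Finset.mul_sum]
    have h2 : ∑ i, (f x * (ρ x * -(fderiv ℝ V x (Pi.single i 1)))) * fderiv ℝ g x (Pi.single i 1)
        = (-(f x * ρ x)) * ∑ i, fderiv ℝ V x (Pi.single i 1) * fderiv ℝ g x (Pi.single i 1) := by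
      rw [Finset.mul_sum]; exact Finset.sum_congr rfl fun i _ => by ring
    rw [h2]; ring
  have int_i : ∀ i : Fin n, Integrable fun x =>
      ((f x * ρ x) * fderiv ℝ (fun y => fderiv ℝ g y (Pi.single i 1)) x (Pi.single i 1)
        + (f x * (ρ x * -(fderiv ℝ V x (Pi.single i 1)))) * fderiv ℝ g x (Pi.single i 1)) := by
    intro i
    have h1 : Integrable fun x =>
        (f x * ρ x) * fderiv ℝ (fun y => fderiv ℝ g y (Pi.single i 1)) x (Pi.single i 1) :=
      integ ((hf.continuous.mul hρc).mul (cont_partial (contDiff_partial hg _) _))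
        (hfs.mul_right.mul_right)
    have h2 : Integrable fun x =>
        (f x * (ρ x * -(fderiv ℝ V x (Pi.single i 1)))) * fderiv ℝ g x (Pi.single i 1) :=
      integ ((hf.continuous.mul (hρc.mul (cont_gradV hV _).neg)).mul (cont_partial hg _))
        (hfs.mul_right.mul_right)
    exact h1.add h2
  calc ∫ x, f x * (-(grad V x ⬝ᵥ grad g x) + lap g x) * ρ x
      = ∫ x, ∑ i, ((f x * ρ x) * fderiv ℝ (fun y => fderiv ℝ g y (Pi.single i 1)) x (Pi.single i 1)
          + (f x * (ρ x * -(fderiv ℝ V x (Pi.single i 1)))) * fderiv ℝ g x (Pi.single i 1)) := by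
        congr 1; ext x; exact lhs_eq x
    _ = ∑ i, ∫ x, ((f x * ρ x) * fderiv ℝ (fun y => fderiv ℝ g y (Pi.single i 1)) x (Pi.single i 1)
          + (f x * (ρ x * -(fderiv ℝ V x (Pi.single i 1)))) * fderiv ℝ g x (Pi.single i 1)) :=
        integral_finset_sum _ (fun i _ => int_i i)
    _ = ∑ i, - ∫ x, (fderiv ℝ f x (Pi.single i 1) * fderiv ℝ g x (Pi.single i 1)) * ρ x :=
        Finset.sum_congr rfl fun i _ => ibp_coord hV hf hfs hg hgs i
    _ = - ∑ i, ∫ x, (fderiv ℝ f x (Pi.single i 1) * fderiv ℝ g x (Pi.single i 1)) * ρ x := by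
        rw [← Finset.sum_neg_distrib]
    _ = - ∫ x, (grad f x ⬝ᵥ grad g x) * ρ x := by
        congr 1
        rw [← integral_finset_sum]
        · congr 1; ext x
          simp only [grad, dotProduct, Finset.sum_mul]
        · intro i _
          exact integ (((cont_partial hf _).mul (cont_partial hg _)).mul hρc)
            ((hcs_partial hfs _).mul_right.mul_right)

end Stmt17Aux

theorem stmt_17 (n : ℕ) (hn : 1 ≤ n)
    (V : (Fin n → ℝ) → ℝ) (hV : ContDiff ℝ 1 V)
    (hVint : Integrable fun x => Real.exp (-V x))
    (L : ((Fin n → ℝ) → ℝ) → (Fin n → ℝ) → ℝ)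
    (hL : ∀ f x, L f x = -(grad V x ⬝ᵥ grad f x) + lap f x +
      ∫ z, (f z - f x) * Real.exp (-V z)) :
    ∀ f g : (Fin n → ℝ) → ℝ,
      ContDiff ℝ (⊤ : ℕ∞) f → HasCompactSupport f →
      ContDiff ℝ (⊤ : ℕ∞) g → HasCompactSupport g →
      ∫ x, f x * L g x * Real.exp (-V x) = ∫ x, g x * L f x * Real.exp (-V x) := by
  classical
  intro f g hf hfs hg hgs
  set ρ : (Fin n → ℝ) → ℝ := fun x => Real.exp (-V x) with hρ
  have hρc : Continuous ρ := Real.continuous_exp.comp hV.continuous.neg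
  set M : ℝ := ∫ z, ρ z with hM
  -- the jump integral rewrites
  have jump_eq : ∀ (h : (Fin n → ℝ) → ℝ), Continuous h → HasCompactSupport h →
      ∀ x, (∫ z, (h z - h x) * ρ z) = (∫ z, h z * ρ z) - h x * M := by
    intro h hc hs x
    have i1 : Integrable fun z => h z * ρ z :=
      Stmt17Aux.integ (hc.mul hρc) (hs.mul_right)
    have i2 : Integrable fun z => h x * ρ z := hVint.const_mul _
    have heq : (fun z => (h z - h x) * ρ z) = fun z => h z * ρ z - h x * ρ z := by
      ext z; ring
    rw [heq, integral_sub i1 i2, integral_const_mul]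
  -- symmetric form of the full integral
  have main : ∀ (u w : (Fin n → ℝ) → ℝ),
      ContDiff ℝ (⊤ : ℕ∞) u → HasCompactSupport u →
      ContDiff ℝ (⊤ : ℕ∞) w → HasCompactSupport w →
      ∫ x, u x * L w x * ρ x
        = - (∫ x, (grad u x ⬝ᵥ grad w x) * ρ x)
          + ((∫ z, w z * ρ z) * (∫ x, u x * ρ x) - M * ∫ x, u x * w x * ρ x) := by
    intro u w hu hus hw hws
    have hA : Continuous fun x => -(grad V x ⬝ᵥ grad w x) + lap w x := by
      have h1 : Continuous fun x => grad V x ⬝ᵥ grad w x := by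
        simp only [dotProduct, grad]
        exact continuous_finset_sum _ fun i _ =>
          (Stmt17Aux.cont_gradV hV _).mul (Stmt17Aux.cont_partial hw _)
      have h2 : Continuous fun x => lap w x := by
        simp only [lap]
        exact continuous_finset_sum _ fun i _ =>
          Stmt17Aux.cont_partial (Stmt17Aux.contDiff_partial hw _) _
      exact h1.neg.add h2
    have int1 : Integrable fun x => u x * (-(grad V x ⬝ᵥ grad w x) + lap w x) * ρ x :=
      Stmt17Aux.integ ((hu.continuous.mul hA).mul hρc) (hus.mul_right.mul_right)
    have int2 : Integrable fun x => u x * ((∫ z, w z * ρ z) - w x * M) * ρ x :=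
      Stmt17Aux.integ ((hu.continuous.mul
        (continuous_const.sub (hw.continuous.mul continuous_const))).mul hρc)
        (hus.mul_right.mul_right)
    have expand : (fun x => u x * L w x * ρ x)
        = fun x => u x * (-(grad V x ⬝ᵥ grad w x) + lap w x) * ρ x
          + u x * ((∫ z, w z * ρ z) - w x * M) * ρ x := by
      ext x
      rw [hL w x, jump_eq w hw.continuous hws x]
      ring
    rw [expand, integral_add int1 int2,
      Stmt17Aux.dirichlet hV hu hus hw hws]
    congr 1
    have j1 : Integrable fun x => (∫ z, w z * ρ z) * (u x * ρ x) :=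
      (Stmt17Aux.integ (hu.continuous.mul hρc) (hus.mul_right)).const_mul _
    have j2 : Integrable fun x => M * (u x * w x * ρ x) :=
      (Stmt17Aux.integ ((hu.continuous.mul hw.continuous).mul hρc)
        (hus.mul_right.mul_right)).const_mul _
    have heq : (fun x => u x * ((∫ z, w z * ρ z) - w x * M) * ρ x)
        = fun x => (∫ z, w z * ρ z) * (u x * ρ x) - M * (u x * w x * ρ x) := by
      ext x; ring
    rw [heq, integral_sub j1 j2, integral_const_mul, integral_const_mul]
  rw [main f g hf hfs hg hgs, main g f hg hgs hf hfs]
  have comm1 : (fun x => (grad f x ⬝ᵥ grad g x) * ρ x)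
      = fun x => (grad g x ⬝ᵥ grad f x) * ρ x := by
    ext x; rw [dotProduct_comm]
  have comm2 : (fun x => f x * g x * ρ x) = fun x => g x * f x * ρ x := by ext x; ring
  rw [comm1, comm2]; ring
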